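/- arXiv:2403.11809 — 2 statements merged into one kernel-verified Lean document; each statement's English description precedes it below -/
import Mathlib

section
/- Let a < b be real numbers, let λ > 0, let κ > 0, and let f : [a, b] → ℝ be continuously differentiable with f′ monotone on [a, b] and |f′(t)| ≥ λ for all t ∈ [a, b]. Then |∫_a^b exp(i·κ·f(t)) dt| ≤ 3/(κ·λ). -/
open MeasureTheory intervalIntegral Set

/-- Stieltjes/Fubini integration by parts bound. -/
lemma vdc_key (a b : ℝ) (hab : a ≤ b) (D F : ℝ → ℂ) (g : ℝ → ℝ) (G : StieltjesFunction ℝ)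
    (ε C B : ℝ) (hε : |ε| = 1) (hB : 0 ≤ B)
    (hD : Continuous D) (hF : Continuous F)
    (hDb : ∀ t, ‖D t‖ ≤ C)
    (hFb : ∀ t, ‖F t‖ ≤ 1)
    (hFTC : ∀ s ∈ Icc a b, F s - F a = ∫ t in a..s, D t)
    (hg : ∀ t ∈ Icc a b, g t = g b - ε * (G b - G t))
    (hga : |g a| ≤ B) (hgb : |g b| ≤ B) (hvar : G b - G a ≤ B) :
    ‖∫ t in Ioc a b, D t * (g t : ℂ)‖ ≤ 3 * B := by
  set μ : Measure ℝ := G.measure.restrict (Ioc a b) with hμdef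
  have hμfin : IsFiniteMeasure μ := by
    constructor
    rw [hμdef, Measure.restrict_apply_univ, StieltjesFunction.measure_Ioc]
    exact ENNReal.ofReal_lt_top
  have hνfin : IsFiniteMeasure (volume.restrict (Ioc a b)) := by
    constructor
    rw [Measure.restrict_apply_univ, Real.volume_Ioc]
    exact ENNReal.ofReal_lt_top
  have hC : 0 ≤ C := le_trans (norm_nonneg _) (hDb a)
  -- step 1: Fubini identity
  have fub : ∫ t in Ioc a b, D t * ((G.measure (Ioc t b)).toReal : ℂ)
      = ∫ s in Ioc a b, (F s - F a) ∂G.measure := by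
    set S : Set (ℝ × ℝ) := {p : ℝ × ℝ | p.1 < p.2 ∧ p.2 ≤ b} with hSdef
    have hSm : MeasurableSet S := by
      have h1 : MeasurableSet {p : ℝ × ℝ | p.1 < p.2} :=
        measurableSet_lt measurable_fst measurable_snd
      have h2 : MeasurableSet {p : ℝ × ℝ | p.2 ≤ b} :=
        measurable_snd measurableSet_Iic
      exact h1.inter h2
    set Φ : ℝ → ℝ → ℂ := fun t s => S.indicator (fun p => D p.1) (t, s) with hΦdef
    have hΦm : AEStronglyMeasurable (Function.uncurry Φ) ((volume.restrict (Ioc a b)).prod μ) := by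
      have : Function.uncurry Φ = S.indicator (fun p => D p.1) := by
        ext p; simp [hΦdef, Function.uncurry]
      rw [this]
      exact ((hD.comp continuous_fst).aestronglyMeasurable).indicator hSm
    have hΦb : ∀ p : ℝ × ℝ, ‖Function.uncurry Φ p‖ ≤ C := by
      intro p
      by_cases hp : p ∈ S
      · simp only [Function.uncurry, hΦdef, Set.indicator_of_mem hp]
        exact hDb _
      · simp only [Function.uncurry, hΦdef]
        rw [show ((p.1, p.2) : ℝ × ℝ) = p from rfl, Set.indicator_of_notMem hp]
        simpa using hC
    have hΦi : Integrable (Function.uncurry Φ) ((volume.restrict (Ioc a b)).prod μ) :=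
      Integrable.mono' (integrable_const C) hΦm (Filter.Eventually.of_forall hΦb)
    have swap := MeasureTheory.integral_integral_swap hΦi
    have lhs_eq : ∫ t in Ioc a b, D t * ((G.measure (Ioc t b)).toReal : ℂ)
        = ∫ t in Ioc a b, ∫ s, Φ t s ∂μ := by
      refine setIntegral_congr_ae measurableSet_Ioc ?_
      refine Filter.Eventually.of_forall fun t ht => ?_
      have hfun : Φ t = (Ioc t b).indicator (fun _ => D t) := by
        ext s
        by_cases hs : s ∈ Ioc t b
        · rw [Set.indicator_of_mem hs]
          exact Set.indicator_of_mem (by exact ⟨hs.1, hs.2⟩) _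
        · rw [Set.indicator_of_notMem hs]
          refine Set.indicator_of_notMem ?_ _
          intro hmem; exact hs ⟨hmem.1, hmem.2⟩
      rw [hfun, integral_indicator_const (D t) measurableSet_Ioc]
      have : μ (Ioc t b) = G.measure (Ioc t b) := by
        rw [hμdef, Measure.restrict_apply measurableSet_Ioc,
          Set.inter_eq_left.2 (Ioc_subset_Ioc_left ht.1.le)]
      rw [measureReal_def, this, Complex.real_smul, mul_comm]
    have rhs_eq : ∫ s, (∫ t in Ioc a b, Φ t s) ∂μ
        = ∫ s in Ioc a b, (F s - F a) ∂G.measure := by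
      rw [hμdef]
      refine setIntegral_congr_ae measurableSet_Ioc ?_
      refine Filter.Eventually.of_forall fun s hs => ?_
      have hfun : (fun t => Φ t s) = (Iio s).indicator D := by
        ext t
        by_cases htm : t ∈ Iio s
        · rw [Set.indicator_of_mem htm]
          exact Set.indicator_of_mem (show (t, s) ∈ S from ⟨htm, hs.2⟩) _
        · rw [Set.indicator_of_notMem htm]
          refine Set.indicator_of_notMem ?_ _
          intro hmem; exact htm hmem.1
      rw [hfun, MeasureTheory.integral_indicator measurableSet_Iio,
        Measure.restrict_restrict measurableSet_Iio]
      have hset : Iio s ∩ Ioc a b = Ioo a s := by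
        ext x
        simp only [mem_inter_iff, mem_Iio, mem_Ioc, mem_Ioo]
        exact ⟨fun h => ⟨h.2.1, h.1⟩, fun h => ⟨h.2, h.1, le_trans h.2.le hs.2⟩⟩
      rw [hset, ← MeasureTheory.integral_Ioc_eq_integral_Ioo,
        ← intervalIntegral.integral_of_le hs.1.le]
      exact (hFTC s ⟨hs.1.le, hs.2⟩).symm
    rw [lhs_eq, swap, rhs_eq]
  have hFi : Integrable F μ := by
    refine Integrable.mono' (integrable_const 1) hF.aestronglyMeasurable ?_
    exact Filter.Eventually.of_forall hFb
  have hGt : ∀ t, t ≤ b → (G.measure (Ioc t b)).toReal = G b - G t := fun t ht => by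
    rw [G.measure_Ioc, ENNReal.toReal_ofReal (sub_nonneg.2 (G.mono ht))]
  have hμu : (μ univ).toReal = G b - G a := by
    rw [hμdef, Measure.restrict_apply_univ]; exact hGt a hab
  -- step 2: main identity
  have main : ∫ t in Ioc a b, D t * (g t : ℂ)
      = (g b : ℂ) * F b - (g a : ℂ) * F a - (ε : ℂ) * ∫ s in Ioc a b, F s ∂G.measure := by
    have hDi : Integrable D (volume.restrict (Ioc a b)) :=
      Integrable.mono' (integrable_const C) hD.aestronglyMeasurable
        (Filter.Eventually.of_forall hDb)
    have hDGi : Integrable (fun t => D t * ((G b - G t : ℝ) : ℂ)) (volume.restrict (Ioc a b)) := by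
      have hmeas : AEStronglyMeasurable (fun t => ((G b - G t : ℝ) : ℂ))
          (volume.restrict (Ioc a b)) :=
        (Complex.measurable_ofReal.comp (measurable_const.sub G.mono.measurable)).aestronglyMeasurable
      refine Integrable.mono' (integrable_const (C * (G b - G a)))
        (hD.aestronglyMeasurable.mul hmeas) ?_
      rw [ae_restrict_iff' measurableSet_Ioc]
      refine Filter.Eventually.of_forall fun t ht => ?_
      rw [norm_mul, Complex.norm_real, Real.norm_eq_abs,
        abs_of_nonneg (sub_nonneg.2 (G.mono ht.2))]
      exact mul_le_mul (hDb t) (by linarith [G.mono ht.1.le]) (by linarith [G.mono ht.2]) hC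
    have step1 : ∫ t in Ioc a b, D t * (g t : ℂ)
        = ∫ t in Ioc a b, ((g b : ℂ) * D t - (ε : ℂ) * (D t * ((G b - G t : ℝ) : ℂ))) := by
      refine setIntegral_congr_ae measurableSet_Ioc ?_
      refine Filter.Eventually.of_forall fun t ht => ?_
      rw [hg t ⟨ht.1.le, ht.2⟩]
      push_cast
      ring
    have hInt1 : Integrable (fun t => (g b : ℂ) * D t) (volume.restrict (Ioc a b)) :=
      hDi.const_mul _
    have hInt2 : Integrable (fun t => (ε : ℂ) * (D t * ((G b - G t : ℝ) : ℂ)))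
        (volume.restrict (Ioc a b)) := hDGi.const_mul _
    rw [step1, integral_sub hInt1 hInt2, MeasureTheory.integral_const_mul, MeasureTheory.integral_const_mul]
    have hDint : ∫ t in Ioc a b, D t = F b - F a := by
      rw [← intervalIntegral.integral_of_le hab]
      exact (hFTC b ⟨hab, le_refl b⟩).symm
    have hfub' : ∫ t in Ioc a b, D t * ((G b - G t : ℝ) : ℂ)
        = (∫ s in Ioc a b, F s ∂G.measure) - (G b - G a) • F a := by
      have e1 : ∫ t in Ioc a b, D t * ((G b - G t : ℝ) : ℂ)
          = ∫ t in Ioc a b, D t * ((G.measure (Ioc t b)).toReal : ℂ) := by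
        refine setIntegral_congr_ae measurableSet_Ioc ?_
        refine Filter.Eventually.of_forall fun t ht => ?_
        rw [hGt t ht.2]
      rw [e1, fub, integral_sub hFi (integrable_const _), MeasureTheory.integral_const, measureReal_def, hμu, ← hμdef]
    rw [hDint, hfub']
    have hgaeq : (g a : ℂ) = (g b : ℂ) - (ε : ℂ) * ((G b : ℂ) - (G a : ℂ)) := by
      have := hg a ⟨le_refl a, hab⟩
      push_cast [this]; ring
    rw [hgaeq, Complex.real_smul]
    push_cast
    ring
  rw [main]
  have h3 : ‖∫ s in Ioc a b, F s ∂G.measure‖ ≤ B := by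
    calc ‖∫ s, F s ∂μ‖ ≤ ∫ s, ‖F s‖ ∂μ := norm_integral_le_integral_norm F
    _ ≤ ∫ _, (1:ℝ) ∂μ := by
        refine integral_mono hFi.norm (integrable_const 1) ?_
        exact fun s => hFb s
    _ = (μ univ).toReal := by simp [measureReal_def]
    _ ≤ B := by
        rw [hμdef, Measure.restrict_apply_univ, StieltjesFunction.measure_Ioc,
          ENNReal.toReal_ofReal (sub_nonneg.2 (G.mono hab))]
        exact hvar
  calc ‖(g b : ℂ) * F b - (g a : ℂ) * F a - (ε : ℂ) * ∫ s in Ioc a b, F s ∂G.measure‖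
      ≤ ‖(g b : ℂ) * F b - (g a : ℂ) * F a‖ + ‖(ε : ℂ) * ∫ s in Ioc a b, F s ∂G.measure‖ :=
        norm_sub_le _ _
    _ ≤ ‖(g b : ℂ) * F b‖ + ‖(g a : ℂ) * F a‖ + ‖(ε : ℂ) * ∫ s in Ioc a b, F s ∂G.measure‖ := by
        gcongr; exact norm_sub_le _ _
    _ ≤ B * 1 + B * 1 + 1 * B := by
        simp only [norm_mul, Complex.norm_real, Real.norm_eq_abs]
        have e1 : |g b| * ‖F b‖ ≤ B * 1 :=
          mul_le_mul hgb (hFb b) (norm_nonneg _) hB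
        have e2 : |g a| * ‖F a‖ ≤ B * 1 :=
          mul_le_mul hga (hFb a) (norm_nonneg _) hB
        have e3 : |ε| * ‖∫ s in Ioc a b, F s ∂G.measure‖ ≤ 1 * B := by
          rw [hε]; linarith [h3]
        linarith
    _ = 3 * B := by ring

/-- The case where `L ≤ f'` on `[a,b]`. -/
lemma vdc_pos (a b : ℝ) (hab : a < b) (L : ℝ) (hL : 0 < L) (κ : ℝ) (hκ : 0 < κ)
    (f f' : ℝ → ℝ)
    (hderiv : ∀ t ∈ Set.Icc a b, HasDerivWithinAt f (f' t) (Set.Icc a b) t)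
    (hcont : ContinuousOn f' (Set.Icc a b))
    (hmono : MonotoneOn f' (Set.Icc a b) ∨ AntitoneOn f' (Set.Icc a b))
    (hpos : ∀ t ∈ Set.Icc a b, L ≤ f' t) :
    ‖∫ t in a..b, Complex.exp (Complex.I * (κ : ℂ) * (f t : ℂ))‖ ≤
      3 / (κ * L) := by
  set c : ℝ → ℝ := fun t => max a (min b t) with hcdef
  have hc_cont : Continuous c := continuous_const.max (continuous_const.min continuous_id)
  have hc_mem : ∀ t, c t ∈ Icc a b :=
    fun t => ⟨le_max_left _ _, max_le hab.le (min_le_left _ _)⟩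
  have hc_id : ∀ t ∈ Icc a b, c t = t := fun t ht => by
    simp only [hcdef]
    rw [min_eq_right ht.2, max_eq_right ht.1]
  have hc_mono : Monotone c := fun x y hxy => by
    simp only [hcdef]
    exact max_le_max le_rfl (min_le_min le_rfl hxy)
  have hfc : ContinuousOn f (Icc a b) := fun t ht => (hderiv t ht).continuousWithinAt
  have hfcl : Continuous (fun t => f (c t)) := hfc.comp_continuous hc_cont hc_mem
  have hf'cl : Continuous (fun t => f' (c t)) := hcont.comp_continuous hc_cont hc_mem
  have hf'pos : ∀ t, 0 < f' (c t) := fun t => lt_of_lt_of_le hL (hpos _ (hc_mem t))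
  -- objects for the key lemma
  set F : ℝ → ℂ := fun t => Complex.exp ((κ : ℂ) * (f (c t) : ℂ) * Complex.I) with hFdef
  set D : ℝ → ℂ := fun t =>
    Complex.exp ((κ : ℂ) * (f (c t) : ℂ) * Complex.I) * ((κ : ℂ) * (f' (c t) : ℂ) * Complex.I)
    with hDdef
  set g : ℝ → ℝ := fun t => (f' (c t))⁻¹ with hgdef
  have hFcont : Continuous F := by
    apply Complex.continuous_exp.comp
    exact (continuous_const.mul (Complex.continuous_ofReal.comp hfcl)).mul continuous_const
  have hDcont : Continuous D := by
    apply hFcont.mul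
    exact (continuous_const.mul (Complex.continuous_ofReal.comp hf'cl)).mul continuous_const
  have hFb : ∀ t, ‖F t‖ = 1 := fun t => by
    show ‖Complex.exp ((κ : ℂ) * (f (c t) : ℂ) * Complex.I)‖ = 1
    rw [Complex.norm_exp]
    simp
  have hIb : ∀ x : ℝ, ‖(κ : ℂ) * (x : ℂ) * Complex.I‖ = κ * |x| := fun x => by
    simp [abs_of_pos hκ]
  obtain ⟨M, hM⟩ := (isCompact_Icc : IsCompact (Icc a b)).exists_bound_of_continuousOn hcont
  have hDb : ∀ t, ‖D t‖ ≤ κ * M := fun t => by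
    show ‖Complex.exp ((κ : ℂ) * (f (c t) : ℂ) * Complex.I) *
      ((κ : ℂ) * (f' (c t) : ℂ) * Complex.I)‖ ≤ κ * M
    rw [norm_mul, hFb t, one_mul, hIb]
    exact mul_le_mul_of_nonneg_left (hM _ (hc_mem t)) hκ.le
  have hgcont : Continuous g := hf'cl.inv₀ fun t => (hf'pos t).ne'
  -- FTC hypothesis
  have hFTC : ∀ s ∈ Icc a b, F s - F a = ∫ t in a..s, D t := by
    intro s hs
    set Fc : ℝ → ℂ := fun u => Complex.exp ((κ : ℂ) * (f u : ℂ) * Complex.I) with hFcdef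
    set Dc : ℝ → ℂ := fun u =>
      Complex.exp ((κ : ℂ) * (f u : ℂ) * Complex.I) * ((κ : ℂ) * (f' u : ℂ) * Complex.I)
      with hDcdef
    have hFcc : ContinuousOn Fc (Icc a b) := by
      apply Complex.continuous_exp.comp_continuousOn
      exact (continuousOn_const.mul
        (Complex.continuous_ofReal.comp_continuousOn hfc)).mul continuousOn_const
    have hDcc : ContinuousOn Dc (Icc a b) := by
      apply hFcc.mul
      exact (continuousOn_const.mul
        (Complex.continuous_ofReal.comp_continuousOn hcont)).mul continuousOn_const
    have hIccs : Icc a s ⊆ Icc a b := Icc_subset_Icc le_rfl hs.2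
    have hder : ∀ t ∈ Ioo a s, HasDerivWithinAt Fc (Dc t) (Ioi t) t := by
      intro t ht
      have htmem : t ∈ Icc a b := hIccs ⟨ht.1.le, ht.2.le⟩
      have h0 : HasDerivWithinAt (fun u => ((f u : ℝ) : ℂ)) ((f' t : ℝ) : ℂ) (Icc a b) t := by
        simpa using (hderiv t htmem).ofReal_comp
      have h2 : HasDerivWithinAt (fun u => (κ : ℂ) * (f u : ℂ)) ((κ : ℂ) * (f' t : ℂ))
          (Icc a b) t := h0.const_mul _
      have h3 : HasDerivWithinAt (fun u => (κ : ℂ) * (f u : ℂ) * Complex.I)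
          ((κ : ℂ) * (f' t : ℂ) * Complex.I) (Icc a b) t := h2.mul_const _
      have h4 := h3.cexp
      have hmem : Icc a b ∈ nhdsWithin t (Ioi t) := by
        apply mem_nhdsWithin.2 ⟨Iio b, isOpen_Iio, lt_of_lt_of_le ht.2 hs.2, ?_⟩
        rintro x ⟨hx1, hx2⟩
        exact ⟨(ht.1.trans hx2).le, hx1.le⟩
      exact h4.mono_of_mem_nhdsWithin hmem
    have hFTCc : ∫ t in a..s, Dc t = Fc s - Fc a :=
      intervalIntegral.integral_eq_sub_of_hasDeriv_right_of_le hs.1 (hFcc.mono hIccs)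
        hder ((hDcc.mono hIccs).intervalIntegrable_of_Icc hs.1)
    have hcongr : ∫ t in a..s, D t = ∫ t in a..s, Dc t := by
      apply intervalIntegral.integral_congr
      intro t ht
      rw [uIcc_of_le hs.1] at ht
      show Complex.exp ((κ : ℂ) * (f (c t) : ℂ) * Complex.I) *
          ((κ : ℂ) * (f' (c t) : ℂ) * Complex.I) = _
      rw [hc_id t (hIccs ht)]
    have e1 : Fc s = F s := by
      show _ = Complex.exp ((κ : ℂ) * (f (c s) : ℂ) * Complex.I)
      rw [hc_id s hs]
    have e2 : Fc a = F a := by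
      show _ = Complex.exp ((κ : ℂ) * (f (c a) : ℂ) * Complex.I)
      rw [hc_id a ⟨le_rfl, hab.le⟩]
    rw [hcongr, hFTCc, e1, e2]
  -- bounds on g
  have hgb_bound : ∀ t ∈ Icc a b, 0 < g t ∧ g t ≤ L⁻¹ := fun t ht => by
    have h1 := hpos t ht
    have hct : c t = t := hc_id t ht
    constructor
    · show 0 < (f' (c t))⁻¹
      exact inv_pos.2 (hf'pos t)
    · show (f' (c t))⁻¹ ≤ L⁻¹
      rw [hct]
      exact inv_anti₀ hL h1
  have hga0 := hgb_bound a ⟨le_rfl, hab.le⟩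
  have hgb0 := hgb_bound b ⟨hab.le, le_rfl⟩
  -- monotonicity cases: construct the Stieltjes function
  obtain ⟨G, ε, hε, hg, hvar⟩ :
      ∃ (G : StieltjesFunction ℝ) (ε : ℝ), |ε| = 1 ∧
        (∀ t ∈ Icc a b, g t = g b - ε * (G b - G t)) ∧ G b - G a ≤ L⁻¹ := by
    rcases hmono with hm | hm
    · -- f' monotone ⇒ g antitone ⇒ use -g
      have hganti : Monotone (fun t => -g t) := by
        intro x y hxy
        have h1 : f' (c x) ≤ f' (c y) := hm (hc_mem x) (hc_mem y) (hc_mono hxy)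
        have h2 : (f' (c y))⁻¹ ≤ (f' (c x))⁻¹ := inv_anti₀ (hf'pos x) h1
        simpa using h2
      refine ⟨⟨fun t => -g t, hganti,
        fun x => (hgcont.neg.continuousAt).continuousWithinAt⟩, -1, by norm_num, ?_, ?_⟩
      · intro t ht
        show g t = g b - (-1) * ((-g b) - (-g t))
        ring
      · show (-g b) - (-g a) ≤ L⁻¹
        linarith [hga0.2, hgb0.1]
    · -- f' antitone ⇒ g monotone
      have hgmono : Monotone g := by
        intro x y hxy
        have h1 : f' (c y) ≤ f' (c x) := hm (hc_mem x) (hc_mem y) (hc_mono hxy)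
        exact inv_anti₀ (hf'pos y) h1
      refine ⟨⟨g, hgmono, fun x => (hgcont.continuousAt).continuousWithinAt⟩, 1,
        by norm_num, ?_, ?_⟩
      · intro t ht
        show g t = g b - 1 * (g b - g t)
        ring
      · show g b - g a ≤ L⁻¹
        linarith [hgb0.2, hga0.1]
  have hga : |g a| ≤ L⁻¹ := by rw [abs_of_pos hga0.1]; exact hga0.2
  have hgb' : |g b| ≤ L⁻¹ := by rw [abs_of_pos hgb0.1]; exact hgb0.2
  have key := vdc_key a b hab.le D F g G ε (κ * M) L⁻¹ hε (inv_nonneg.2 hL.le)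
    hDcont hFcont hDb (fun t => (hFb t).le) hFTC hg hga hgb' hvar
  -- convert the original integral
  have hκc : (κ : ℂ) ≠ 0 := by exact_mod_cast hκ.ne'
  have conv : ∫ t in a..b, Complex.exp (Complex.I * (κ : ℂ) * (f t : ℂ))
      = (Complex.I * κ)⁻¹ * ∫ t in Ioc a b, D t * (g t : ℂ) := by
    rw [intervalIntegral.integral_of_le hab.le, ← MeasureTheory.integral_const_mul]
    refine setIntegral_congr_ae measurableSet_Ioc (Filter.Eventually.of_forall fun t ht => ?_)
    have htm : t ∈ Icc a b := ⟨ht.1.le, ht.2⟩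
    have hct : c t = t := hc_id t htm
    have hne : f' t ≠ 0 := (hL.trans_le (hpos t htm)).ne'
    have hnec : (f' t : ℂ) ≠ 0 := by exact_mod_cast hne
    show Complex.exp (Complex.I * (κ : ℂ) * (f t : ℂ))
      = (Complex.I * κ)⁻¹ * (Complex.exp ((κ : ℂ) * (f (c t) : ℂ) * Complex.I) *
        ((κ : ℂ) * (f' (c t) : ℂ) * Complex.I) * ((f' (c t))⁻¹ : ℝ))
    rw [hct]
    have harg : (κ : ℂ) * (f t : ℂ) * Complex.I = Complex.I * (κ : ℂ) * (f t : ℂ) := by ring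
    rw [harg]
    push_cast
    field_simp
  rw [conv, norm_mul, norm_inv]
  have habsIκ : ‖Complex.I * κ‖ = κ := by
    rw [norm_mul, Complex.norm_I, one_mul, Complex.norm_real, Real.norm_eq_abs, abs_of_pos hκ]
  rw [habsIκ]
  have hnorm : ‖∫ t in Ioc a b, D t * (g t : ℂ)‖ ≤ 3 * L⁻¹ := key
  calc κ⁻¹ * ‖∫ t in Ioc a b, D t * (g t : ℂ)‖
      ≤ κ⁻¹ * (3 * L⁻¹) := by
        exact mul_le_mul_of_nonneg_left hnorm (inv_nonneg.2 hκ.le)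
    _ = 3 / (κ * L) := by field_simp

/-- first-order van der Corput (non-stationary phase) estimate:
if `f` is continuously differentiable on `[a, b]` with monotone derivative
bounded below in absolute value by `L > 0`, then the oscillatory integral is
bounded by `3 / (κ * L)`. -/
theorem stmt_5 (a b : ℝ) (hab : a < b) (L : ℝ) (hL : 0 < L) (κ : ℝ) (hκ : 0 < κ)
    (f f' : ℝ → ℝ)
    (hderiv : ∀ t ∈ Set.Icc a b, HasDerivWithinAt f (f' t) (Set.Icc a b) t)
    (hcont : ContinuousOn f' (Set.Icc a b))
    (hmono : MonotoneOn f' (Set.Icc a b) ∨ AntitoneOn f' (Set.Icc a b))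
    (hlb : ∀ t ∈ Set.Icc a b, L ≤ |f' t|) :
    ‖∫ t in a..b, Complex.exp (Complex.I * (κ : ℂ) * (f t : ℂ))‖ ≤
      3 / (κ * L) := by
  have hne : ∀ t ∈ Icc a b, f' t ≠ 0 := by
    intro t ht h
    have := hlb t ht
    rw [h, abs_zero] at this
    linarith
  have hsign : (∀ t ∈ Icc a b, 0 < f' t) ∨ (∀ t ∈ Icc a b, f' t < 0) := by
    have hamem : a ∈ Icc a b := ⟨le_rfl, hab.le⟩
    rcases lt_or_gt_of_ne (hne a hamem) with hneg | hposa
    · right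
      intro t ht
      by_contra h
      push_neg at h
      have ht0 : 0 < f' t := lt_of_le_of_ne h (Ne.symm (hne t ht))
      have hsub : uIcc a t ⊆ Icc a b := by
        rw [uIcc_of_le ht.1]
        exact Icc_subset_Icc le_rfl ht.2
      have h0mem : (0 : ℝ) ∈ uIcc (f' a) (f' t) := by
        rw [Set.mem_uIcc]
        left; exact ⟨hneg.le, ht0.le⟩
      obtain ⟨s, hs, hs0⟩ := intermediate_value_uIcc (hcont.mono hsub) h0mem
      exact hne s (hsub hs) hs0
    · left
      intro t ht
      by_contra h
      push_neg at h
      have ht0 : f' t < 0 := lt_of_le_of_ne h (hne t ht)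
      have hsub : uIcc a t ⊆ Icc a b := by
        rw [uIcc_of_le ht.1]
        exact Icc_subset_Icc le_rfl ht.2
      have h0mem : (0 : ℝ) ∈ uIcc (f' a) (f' t) := by
        rw [Set.mem_uIcc]
        right; exact ⟨ht0.le, hposa.le⟩
      obtain ⟨s, hs, hs0⟩ := intermediate_value_uIcc (hcont.mono hsub) h0mem
      exact hne s (hsub hs) hs0
  rcases hsign with hpos | hneg
  · exact vdc_pos a b hab L hL κ hκ f f' hderiv hcont hmono
      (fun t ht => by have := hlb t ht; rwa [abs_of_pos (hpos t ht)] at this)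
  · -- apply to -f
    have key := vdc_pos a b hab L hL κ hκ (fun t => -f t) (fun t => -f' t)
      (fun t ht => (hderiv t ht).neg) hcont.neg
      (by rcases hmono with hm | hm
          · exact Or.inr hm.neg
          · exact Or.inl hm.neg)
      (fun t ht => by
        have := hlb t ht
        rwa [abs_of_neg (hneg t ht)] at this)
    have hconj : ∫ t in a..b, Complex.exp (Complex.I * (κ : ℂ) * ((-f t : ℝ) : ℂ))
        = (starRingEnd ℂ) (∫ t in a..b, Complex.exp (Complex.I * (κ : ℂ) * (f t : ℂ))) := by
      rw [intervalIntegral.integral_of_le hab.le, intervalIntegral.integral_of_le hab.le,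
        ← integral_conj]
      refine setIntegral_congr_ae measurableSet_Ioc (Filter.Eventually.of_forall fun t ht => ?_)
      rw [← Complex.exp_conj]
      congr 1
      simp [Complex.ext_iff]
    rw [hconj, Complex.norm_conj] at key
    exact key
end

section
/- Let p, q ∈ ℝ² be distinct points whose second coordinates are strictly positive (i.e., both lie in the open upper half-plane), and let a < b be real numbers. Then lim_{κ → ∞} ∫_a^b exp(i·κ·(‖p − (t, 0)‖ − ‖q − (t, 0)‖)) / ‖p − (t, 0)‖ dt = 0, where the limit is taken over real κ tending to +∞. -/
open MeasureTheory intervalIntegral Filter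

/-- The point `(t, 0)` of the x-axis, viewed in the Euclidean plane. -/
noncomputable def xAxisPoint (t : ℝ) : EuclideanSpace ℝ (Fin 2) :=
  (WithLp.equiv 2 (Fin 2 → ℝ)).symm ![t, 0]

lemma norm_exp_I_mul (κ x : ℝ) : ‖Complex.exp (Complex.I * κ * x)‖ = 1 := by
  rw [Complex.norm_exp]
  simp [Complex.mul_re]

/-- Nonstationary oscillatory integral decays, by integration by parts. -/
lemma osc_nonstat (φ φ' φ'' : ℝ → ℝ) (A A' : ℝ → ℂ)
    (hφ : ∀ t, HasDerivAt φ (φ' t) t) (hφ' : ∀ t, HasDerivAt φ' (φ'' t) t)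
    (hφ''c : Continuous φ'') (hA : ∀ t, HasDerivAt A (A' t) t) (hA'c : Continuous A')
    (a b : ℝ) (hab : a ≤ b) (hne : ∀ t ∈ Set.Icc a b, φ' t ≠ 0) :
    Tendsto (fun κ : ℝ => ∫ t in a..b, Complex.exp (Complex.I * κ * φ t) * A t)
      atTop (nhds 0) := by
  have hφ'c : Continuous φ' := by
    rw [continuous_iff_continuousAt]; exact fun t => (hφ' t).continuousAt
  have hAc : Continuous A := by
    rw [continuous_iff_continuousAt]; exact fun t => (hA t).continuousAt
  have hφc : Continuous φ := by
    rw [continuous_iff_continuousAt]; exact fun t => (hφ t).continuousAt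
  set G : ℝ → ℂ := fun t => A t / (φ' t : ℂ) with hG
  set G' : ℝ → ℂ := fun t => (A' t * (φ' t : ℂ) - A t * (φ'' t : ℂ)) / (φ' t : ℂ) ^ 2
    with hG'
  have hGd : ∀ t ∈ Set.Icc a b, HasDerivAt G (G' t) t := by
    intro t ht
    exact (hA t).div ((hφ' t).ofReal_comp) (by exact_mod_cast hne t ht)
  have hG'cont : ContinuousOn G' (Set.Icc a b) := by
    apply ContinuousOn.div
    · exact ((hA'c.mul (Complex.continuous_ofReal.comp hφ'c)).sub
        (hAc.mul (Complex.continuous_ofReal.comp hφ''c))).continuousOn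
    · exact ((Complex.continuous_ofReal.comp hφ'c).pow 2).continuousOn
    · intro t ht
      have := hne t ht
      intro h
      rw [pow_eq_zero_iff (by norm_num)] at h
      exact this (by exact_mod_cast h)
  set C : ℝ := ‖G b‖ + ‖G a‖ + ∫ t in a..b, ‖G' t‖ with hC
  have key : ∀ κ : ℝ, 1 ≤ κ →
      ‖∫ t in a..b, Complex.exp (Complex.I * κ * φ t) * A t‖ ≤ C / κ := by
    intro κ hκ
    have hκ0 : (0:ℝ) < κ := lt_of_lt_of_le one_pos hκ
    set v : ℝ → ℂ := fun t => Complex.exp (Complex.I * κ * φ t) with hv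
    set v' : ℝ → ℂ := fun t => Complex.exp (Complex.I * κ * φ t) * (Complex.I * κ * φ' t)
      with hv'
    have hvd : ∀ t, HasDerivAt v (v' t) t := by
      intro t
      exact (((hφ t).ofReal_comp).const_mul (Complex.I * κ)).cexp
    have hInt : IntervalIntegrable G' volume a b :=
      (hG'cont.mono (by rw [Set.uIcc_of_le hab])).intervalIntegrable
    have hIntv' : IntervalIntegrable v' volume a b := by
      apply Continuous.intervalIntegrable
      exact (Complex.continuous_exp.comp (by fun_prop)).mul (by fun_prop)
    have ibp : ∫ t in a..b, G t * v' t
        = G b * v b - G a * v a - ∫ t in a..b, G' t * v t :=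
      integral_mul_deriv_eq_deriv_mul
        (fun x hx => hGd x (by rwa [Set.uIcc_of_le hab] at hx))
        (fun x _ => hvd x) hInt hIntv'
    have congr1 : ∫ t in a..b, G t * v' t
        = (Complex.I * κ) * ∫ t in a..b, Complex.exp (Complex.I * κ * φ t) * A t := by
      rw [← intervalIntegral.integral_const_mul]
      apply intervalIntegral.integral_congr
      intro t ht
      rw [Set.uIcc_of_le hab] at ht
      have hz : (φ' t : ℂ) ≠ 0 := by exact_mod_cast hne t ht
      simp only [hG, hv']
      rw [div_mul_eq_mul_div, div_eq_iff hz]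
      ring
    have hIκ : (Complex.I * κ) ≠ 0 := by
      simp [Complex.ext_iff, Complex.I_ne_zero, ne_of_gt hκ0]
    have main : (∫ t in a..b, Complex.exp (Complex.I * κ * φ t) * A t)
        = (G b * v b - G a * v a - ∫ t in a..b, G' t * v t) / (Complex.I * κ) := by
      rw [eq_div_iff hIκ, mul_comm, ← congr1, ibp]
    rw [main, norm_div]
    have hnormIκ : ‖Complex.I * (κ:ℂ)‖ = κ := by
      simp [abs_of_pos hκ0]
    rw [hnormIκ]
    gcongr
    calc ‖G b * v b - G a * v a - ∫ t in a..b, G' t * v t‖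
        ≤ ‖G b * v b - G a * v a‖ + ‖∫ t in a..b, G' t * v t‖ := norm_sub_le _ _
      _ ≤ (‖G b * v b‖ + ‖G a * v a‖) + ‖∫ t in a..b, G' t * v t‖ := by
          gcongr; exact norm_sub_le _ _
      _ ≤ C := by
          have h1 : ‖G b * v b‖ = ‖G b‖ := by
            rw [norm_mul, norm_exp_I_mul, mul_one]
          have h2 : ‖G a * v a‖ = ‖G a‖ := by
            rw [norm_mul, norm_exp_I_mul, mul_one]
          have h3 : ‖∫ t in a..b, G' t * v t‖ ≤ ∫ t in a..b, ‖G' t‖ := by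
            refine (intervalIntegral.norm_integral_le_integral_norm hab).trans_eq ?_
            apply intervalIntegral.integral_congr
            intro t _
            show ‖G' t * v t‖ = ‖G' t‖
            rw [norm_mul, norm_exp_I_mul, mul_one]
          rw [h1, h2, hC]
          linarith
  exact squeeze_zero_norm'
    (a := fun κ : ℝ => C / κ)
    (by filter_upwards [eventually_ge_atTop 1] with κ hκ using key κ hκ)
    (Tendsto.div_atTop tendsto_const_nhds tendsto_id)

/-- An oscillatory integral whose phase has at most one stationary point decays. -/
lemma osc_tendsto (φ φ' φ'' : ℝ → ℝ) (A A' : ℝ → ℂ)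
    (hφ : ∀ t, HasDerivAt φ (φ' t) t) (hφ' : ∀ t, HasDerivAt φ' (φ'' t) t)
    (hφ''c : Continuous φ'') (hA : ∀ t, HasDerivAt A (A' t) t) (hA'c : Continuous A')
    (hS : ∀ s t : ℝ, φ' s = 0 → φ' t = 0 → s = t)
    (a b : ℝ) (hab : a ≤ b) :
    Tendsto (fun κ : ℝ => ∫ t in a..b, Complex.exp (Complex.I * κ * φ t) * A t)
      atTop (nhds 0) := by
  have hAc : Continuous A := by
    rw [continuous_iff_continuousAt]; exact fun t => (hA t).continuousAt
  have hφc : Continuous φ := by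
    rw [continuous_iff_continuousAt]; exact fun t => (hφ t).continuousAt
  have hIcont : ∀ κ : ℝ, Continuous (fun t => Complex.exp (Complex.I * κ * φ t) * A t) := by
    intro κ
    exact (Complex.continuous_exp.comp (by fun_prop)).mul hAc
  by_cases hex : ∃ t₀ ∈ Set.Icc a b, φ' t₀ = 0
  swap
  · push_neg at hex
    exact osc_nonstat φ φ' φ'' A A' hφ hφ' hφ''c hA hA'c a b hab hex
  obtain ⟨t₀, ht₀m, ht₀⟩ := hex
  rw [NormedAddCommGroup.tendsto_nhds_zero]
  intro ε hε
  obtain ⟨C, hCb⟩ := (isCompact_Icc (a := a) (b := b)).exists_bound_of_continuousOn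
    hAc.continuousOn
  set M : ℝ := max C 1 with hM
  have hM0 : 0 < M := lt_of_lt_of_le one_pos (le_max_right _ _)
  have hMb : ∀ t ∈ Set.Icc a b, ‖A t‖ ≤ M := fun t ht => (hCb t ht).trans (le_max_left _ _)
  set δ : ℝ := ε / (8 * M) with hδ
  have hδ0 : 0 < δ := by positivity
  set c : ℝ := max a (t₀ - δ) with hc
  set d : ℝ := min b (t₀ + δ) with hd
  have hac : a ≤ c := le_max_left _ _
  have hct₀ : c ≤ t₀ := max_le ht₀m.1 (by linarith)
  have ht₀d : t₀ ≤ d := le_min ht₀m.2 (by linarith)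
  have hcd : c ≤ d := hct₀.trans ht₀d
  have hdb : d ≤ b := min_le_left _ _
  have hsplit : ∀ κ : ℝ, (∫ t in a..b, Complex.exp (Complex.I * κ * φ t) * A t)
      = (∫ t in a..c, Complex.exp (Complex.I * κ * φ t) * A t)
      + (∫ t in c..d, Complex.exp (Complex.I * κ * φ t) * A t)
      + (∫ t in d..b, Complex.exp (Complex.I * κ * φ t) * A t) := by
    intro κ
    have i1 := (hIcont κ).intervalIntegrable (μ := volume) a c
    have i2 := (hIcont κ).intervalIntegrable (μ := volume) c d
    have i3 := (hIcont κ).intervalIntegrable (μ := volume) d b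
    rw [intervalIntegral.integral_add_adjacent_intervals i1 i2,
      intervalIntegral.integral_add_adjacent_intervals (i1.trans i2) i3]
  have hmid : ∀ κ : ℝ, ‖∫ t in c..d, Complex.exp (Complex.I * κ * φ t) * A t‖ ≤ ε / 4 := by
    intro κ
    have : ‖∫ t in c..d, Complex.exp (Complex.I * κ * φ t) * A t‖ ≤ M * |d - c| := by
      apply intervalIntegral.norm_integral_le_of_norm_le_const
      intro x hx
      rw [Set.uIoc_of_le hcd] at hx
      have hxm : x ∈ Set.Icc a b := ⟨hac.trans (le_of_lt hx.1), hx.2.trans hdb⟩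
      rw [norm_mul, norm_exp_I_mul, one_mul]
      exact hMb x hxm
    refine this.trans ?_
    have h2δ : |d - c| ≤ 2 * δ := by
      rw [abs_of_nonneg (by linarith)]
      have : t₀ - δ ≤ c := le_max_right _ _
      have : d ≤ t₀ + δ := min_le_right _ _
      linarith
    calc M * |d - c| ≤ M * (2 * δ) := by nlinarith
      _ = ε / 4 := by rw [hδ]; field_simp <;> ring
  have h1 : Tendsto (fun κ : ℝ => ∫ t in a..c, Complex.exp (Complex.I * κ * φ t) * A t)
      atTop (nhds 0) := by
    rcases eq_or_lt_of_le hac with h | h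
    · simp [← h, tendsto_const_nhds]
    · have hceq : c = t₀ - δ := by
        rcases max_cases a (t₀ - δ) with ⟨h1, _⟩ | ⟨h1, _⟩
        · exact absurd h1 (by rw [hc] at h; intro hcc; rw [hcc] at h; exact lt_irrefl _ h)
        · exact h1
      apply osc_nonstat φ φ' φ'' A A' hφ hφ' hφ''c hA hA'c a c h.le
      intro t ht hzero
      have := hS t t₀ hzero ht₀
      rw [this] at ht
      have := ht.2
      rw [hceq] at this
      linarith
  have h3 : Tendsto (fun κ : ℝ => ∫ t in d..b, Complex.exp (Complex.I * κ * φ t) * A t)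
      atTop (nhds 0) := by
    rcases eq_or_lt_of_le hdb with h | h
    · simp [h, tendsto_const_nhds]
    · have hdeq : d = t₀ + δ := by
        rcases min_cases b (t₀ + δ) with ⟨h1, _⟩ | ⟨h1, _⟩
        · exact absurd h1 (by rw [hd] at h; intro hcc; rw [hcc] at h; exact lt_irrefl _ h)
        · exact h1
      apply osc_nonstat φ φ' φ'' A A' hφ hφ' hφ''c hA hA'c d b h.le
      intro t ht hzero
      have := hS t t₀ hzero ht₀
      rw [this] at ht
      have := ht.1
      rw [hdeq] at this
      linarith
  have e1 := (NormedAddCommGroup.tendsto_nhds_zero.mp h1) (ε/4) (by positivity)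
  have e3 := (NormedAddCommGroup.tendsto_nhds_zero.mp h3) (ε/4) (by positivity)
  filter_upwards [e1, e3] with κ hκ1 hκ3
  rw [hsplit κ]
  calc ‖_ + _ + _‖ ≤ ‖_ + _‖ + ‖_‖ := norm_add_le _ _
    _ ≤ ‖_‖ + ‖_‖ + ‖_‖ := by gcongr; exact norm_add_le _ _
    _ < ε := by
        have := hmid κ
        linarith

/-- The distance from `(x, y)` to `(t, 0)`, as an explicit function. -/
noncomputable def rfun (x y t : ℝ) : ℝ := Real.sqrt ((x - t)^2 + y^2)

lemma rfun_pos (x y t : ℝ) (hy : 0 < y) : 0 < rfun x y t :=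
  Real.sqrt_pos.mpr (by positivity)

lemma rfun_sq (x y t : ℝ) : (rfun x y t)^2 = (x - t)^2 + y^2 :=
  Real.sq_sqrt (by positivity)

lemma rfun_continuous (x y : ℝ) : Continuous (rfun x y) :=
  Real.continuous_sqrt.comp (by fun_prop)

lemma hasDerivAt_rfun (x y t : ℝ) (hy : 0 < y) :
    HasDerivAt (rfun x y) ((t - x) / rfun x y t) t := by
  have h : HasDerivAt (fun s : ℝ => (x - s)^2 + y^2) (2*(x - t)*(-1)) t := by
    have h1 : HasDerivAt (fun s : ℝ => x - s) (-1) t := by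
      simpa using ((hasDerivAt_id t).const_sub x)
    simpa using (h1.pow 2).add_const (y^2)
  have hne : (x - t)^2 + y^2 ≠ 0 := by positivity
  have := h.sqrt hne
  convert this using 1
  · rfl
  have hr := rfun_pos x y t hy
  rw [show Real.sqrt ((x - t)^2 + y^2) = rfun x y t from rfl]
  field_simp
  ring

lemma hasDerivAt_rfun' (x y t : ℝ) (hy : 0 < y) :
    HasDerivAt (fun s => (s - x) / rfun x y s) (y^2 / (rfun x y t)^3) t := by
  have hr := rfun_pos x y t hy
  have h := ((hasDerivAt_id t).sub_const x).fun_div (hasDerivAt_rfun x y t hy) hr.ne'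
  refine h.congr_deriv ?_
  have hsq := rfun_sq x y t
  field_simp
  simp only [id_eq]
  linear_combination hsq

lemma eq_of_sq_eq_sq_of_mul_nonneg (a b : ℝ) (h : a^2 = b^2) (h2 : 0 ≤ a*b) : a = b := by
  have hz : (a*b - b^2)*(a*b + b^2) = 0 := by linear_combination b^2 * h
  rcases mul_eq_zero.mp hz with h3 | h3
  · nlinarith [sq_nonneg (a - b)]
  · have hb : b = 0 := by nlinarith [sq_nonneg b]
    have ha : a = 0 := by nlinarith [sq_nonneg a]
    rw [ha, hb]

lemma stat_lin (p0 p1 q0 q1 t : ℝ) (hp1 : 0 < p1) (hq1 : 0 < q1)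
    (h : (t - p0)/rfun p0 p1 t - (t - q0)/rfun q0 q1 t = 0) :
    (t - p0)*q1 = (t - q0)*p1 := by
  have hfp := rfun_pos p0 p1 t hp1
  have hfq := rfun_pos q0 q1 t hq1
  have hsqp := rfun_sq p0 p1 t
  have hsqq := rfun_sq q0 q1 t
  have h1 : (t - p0) * rfun q0 q1 t = (t - q0) * rfun p0 p1 t := by
    field_simp at h
    linarith
  have h1sq : (t-p0)^2 * (rfun q0 q1 t)^2 = (t-q0)^2 * (rfun p0 p1 t)^2 := by
    linear_combination ((t-p0)*rfun q0 q1 t + (t-q0)*rfun p0 p1 t) * h1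
  rw [hsqp, hsqq] at h1sq
  have h2 : ((t-p0)*q1)^2 = ((t-q0)*p1)^2 := by linear_combination h1sq
  have h3 : (t-p0)*(t-q0)*rfun q0 q1 t = (t-q0)^2 * rfun p0 p1 t := by
    linear_combination (t-q0)*h1
  have hXY : 0 ≤ (t-p0)*(t-q0) := by
    nlinarith [h3, hfq, mul_nonneg (sq_nonneg (t-q0)) hfp.le]
  exact eq_of_sq_eq_sq_of_mul_nonneg _ _ h2
    (by nlinarith [mul_nonneg hXY (mul_pos hq1 hp1).le])

lemma stat_unique (p0 p1 q0 q1 : ℝ) (hp1 : 0 < p1) (hq1 : 0 < q1)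
    (hne : ¬(p0 = q0 ∧ p1 = q1)) (s t : ℝ)
    (hs : (s - p0)/rfun p0 p1 s - (s - q0)/rfun q0 q1 s = 0)
    (ht : (t - p0)/rfun p0 p1 t - (t - q0)/rfun q0 q1 t = 0) : s = t := by
  have ls := stat_lin p0 p1 q0 q1 s hp1 hq1 hs
  have lt := stat_lin p0 p1 q0 q1 t hp1 hq1 ht
  by_cases hpq1 : p1 = q1
  · exfalso
    apply hne
    refine ⟨?_, hpq1⟩
    subst hpq1
    have : (s - p0) = (s - q0) := mul_right_cancel₀ hp1.ne' (by linarith)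
    linarith
  · have key : (s - t) * (q1 - p1) = 0 := by linear_combination ls - lt
    have hne2 := sub_ne_zero.mpr (Ne.symm hpq1)
    rcases mul_eq_zero.mp key with h | h
    · linarith [sub_eq_zero.mp h]
    · exact absurd h hne2

lemma norm_sub_xAxisPoint (p : EuclideanSpace ℝ (Fin 2)) (t : ℝ) :
    ‖p - xAxisPoint t‖ = rfun (p 0) (p 1) t := by
  rw [EuclideanSpace.norm_eq, rfun]
  congr 1
  rw [Fin.sum_univ_two]
  have h0 : (p - xAxisPoint t) 0 = p 0 - t := by
    simp [xAxisPoint]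
  have h1 : (p - xAxisPoint t) 1 = p 1 := by
    simp [xAxisPoint]
  rw [h0, h1]
  simp [sq_abs]

/-- for distinct points `p ≠ q` of the open upper half-plane, the
continuous-aperture time-inversion desired term evaluated at `q` vanishes as
the wavenumber `κ → ∞`. -/
theorem stmt_6 (p q : EuclideanSpace ℝ (Fin 2)) (hpq : p ≠ q)
    (hp : 0 < p 1) (hq : 0 < q 1) (a b : ℝ) (hab : a < b) :
    Tendsto
      (fun κ : ℝ => ∫ t in a..b,
        Complex.exp (Complex.I * (κ : ℂ) *
            ((‖p - xAxisPoint t‖ : ℝ) - (‖q - xAxisPoint t‖ : ℝ)))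
          / ((‖p - xAxisPoint t‖ : ℝ) : ℂ))
      atTop (nhds 0) := by
  set p0 := p 0 with hp0
  set p1 := p 1 with hp1
  set q0 := q 0 with hq0
  set q1 := q 1 with hq1
  have hnecoord : ¬(p0 = q0 ∧ p1 = q1) := by
    rintro ⟨h0, h1⟩
    apply hpq
    ext i
    fin_cases i
    · exact h0
    · exact h1
  set φ : ℝ → ℝ := fun t => rfun p0 p1 t - rfun q0 q1 t with hφdef
  set φ' : ℝ → ℝ := fun t => (t - p0)/rfun p0 p1 t - (t - q0)/rfun q0 q1 t with hφ'def
  set φ'' : ℝ → ℝ := fun t => p1^2/(rfun p0 p1 t)^3 - q1^2/(rfun q0 q1 t)^3 with hφ''def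
  set A : ℝ → ℂ := fun t => ((rfun p0 p1 t : ℝ) : ℂ)⁻¹ with hAdef
  set A' : ℝ → ℂ := fun t =>
    -(((t - p0)/rfun p0 p1 t : ℝ) : ℂ) / ((rfun p0 p1 t : ℝ) : ℂ)^2 with hA'def
  have hφd : ∀ t, HasDerivAt φ (φ' t) t := fun t =>
    (hasDerivAt_rfun p0 p1 t hp).sub (hasDerivAt_rfun q0 q1 t hq)
  have hφ'd : ∀ t, HasDerivAt φ' (φ'' t) t := fun t =>
    (hasDerivAt_rfun' p0 p1 t hp).sub (hasDerivAt_rfun' q0 q1 t hq)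
  have hφ''c : Continuous φ'' := by
    apply Continuous.sub
    · exact continuous_const.div ((rfun_continuous p0 p1).pow 3)
        (fun t => pow_ne_zero 3 (rfun_pos p0 p1 t hp).ne')
    · exact continuous_const.div ((rfun_continuous q0 q1).pow 3)
        (fun t => pow_ne_zero 3 (rfun_pos q0 q1 t hq).ne')
  have hAd : ∀ t, HasDerivAt A (A' t) t := by
    intro t
    have h1 : HasDerivAt (fun s : ℝ => ((rfun p0 p1 s : ℝ) : ℂ))
        (((t - p0)/rfun p0 p1 t : ℝ) : ℂ) t := (hasDerivAt_rfun p0 p1 t hp).ofReal_comp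
    have hne : ((rfun p0 p1 t : ℝ) : ℂ) ≠ 0 := by
      exact_mod_cast (rfun_pos p0 p1 t hp).ne'
    have h2 := (hasDerivAt_const t (1:ℂ)).fun_div h1 hne
    simp only [one_div] at h2
    refine h2.congr_deriv ?_
    simp only [hA'def]
    ring
  have hA'c : Continuous A' := by
    apply Continuous.div
    · apply Continuous.neg
      exact Complex.continuous_ofReal.comp
        (Continuous.div (by fun_prop) (rfun_continuous p0 p1)
          (fun t => (rfun_pos p0 p1 t hp).ne'))
    · exact (Complex.continuous_ofReal.comp (rfun_continuous p0 p1)).pow 2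
    · intro t
      apply pow_ne_zero
      exact_mod_cast (rfun_pos p0 p1 t hp).ne'
  have hS : ∀ s t : ℝ, φ' s = 0 → φ' t = 0 → s = t := fun s t hs ht =>
    stat_unique p0 p1 q0 q1 hp hq hnecoord s t hs ht
  have heq : (fun κ : ℝ => ∫ t in a..b,
        Complex.exp (Complex.I * (κ : ℂ) *
            ((‖p - xAxisPoint t‖ : ℝ) - (‖q - xAxisPoint t‖ : ℝ)))
          / ((‖p - xAxisPoint t‖ : ℝ) : ℂ))
      = (fun κ : ℝ => ∫ t in a..b, Complex.exp (Complex.I * κ * φ t) * A t) := by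
    funext κ
    apply intervalIntegral.integral_congr
    intro t _
    show Complex.exp (Complex.I * κ * ((‖p - xAxisPoint t‖ : ℝ) - (‖q - xAxisPoint t‖ : ℝ)))
          / ((‖p - xAxisPoint t‖ : ℝ) : ℂ)
        = Complex.exp (Complex.I * κ * φ t) * A t
    rw [norm_sub_xAxisPoint p t, norm_sub_xAxisPoint q t]
    rw [div_eq_mul_inv]
    simp only [← hp0, ← hp1, ← hq0, ← hq1, hφdef, hAdef]
    push_cast
    ring
  rw [heq]
  exact osc_tendsto φ φ' φ'' A A' hφd hφ'd hφ''c hAd hA'c hS a b hab.le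
end
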